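/- Let q ≥ 4 be an integer, ε ∈ (0, 1/2], n ≥ 1, and let ρ ≥ 1 be a real number such that α_ε^{1/ρ} ≥ 1/2 if q is even, and α_ε^{1/ρ} ≥ 1/(2 cos(π/q)) if q is odd. Then for every probability mass function P on (ZMod q)ⁿ one has Qⁿ(ρ, P) ≥ θ_q^{−n}, where θ_q = q/2 if q is even and θ_q = q cos(π/q)/(1 + cos(π/q)) if q is odd; equivalently, E_x^n(ρ) := −(ρ/n) log₂ min_P Qⁿ(ρ, P) ≤ ρ log₂ θ_q. -/

import Mathlib

open Finset Complex Real

/-- The typewriter channel transition probabilities on `ZMod q`. -/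
noncomputable def W (q : ℕ) (ε : ℝ) (y x : ZMod q) : ℝ :=
  if y = x then 1 - ε else if y = x + 1 then ε else 0

/-- `α_ε = √(ε(1-ε))`. -/
noncomputable def alphaE (ε : ℝ) : ℝ := Real.sqrt (ε * (1 - ε))

/-- Single-letter Bhattacharyya kernel `g₁(a,b) = Σ_y √(W(y|a) W(y|b))`. -/
noncomputable def g1 (q : ℕ) [NeZero q] (ε : ℝ) (a b : ZMod q) : ℝ :=
  ∑ y : ZMod q, Real.sqrt (W q ε y a * W q ε y b)

/-- `gₙ(x,x') = ∏ₖ g₁(xₖ, x'ₖ)`. -/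
noncomputable def gn (q : ℕ) [NeZero q] (n : ℕ) (ε : ℝ) (x x' : Fin n → ZMod q) : ℝ :=
  ∏ k, g1 q ε (x k) (x' k)

/-- The quadratic form `Qⁿ(ρ, P) = Σ_{x,x'} P(x)P(x') gₙ(x,x')^{1/ρ}`
(real `rpow`, so `0^{1/ρ} = 0` for `ρ ≥ 1`). -/
noncomputable def Qn (q : ℕ) [NeZero q] (n : ℕ) (ε ρ : ℝ)
    (P : (Fin n → ZMod q) → ℝ) : ℝ :=
  ∑ x : Fin n → ZMod q, ∑ x' : Fin n → ZMod q,
    P x * P x' * (gn q n ε x x') ^ (1 / ρ)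

/-- `θ_q`: `q/2` for even `q`, and the Lovász theta function of the `q`-cycle for odd `q`. -/
noncomputable def thetaQ (q : ℕ) : ℝ :=
  if Even q then (q : ℝ) / 2
  else (q : ℝ) * Real.cos (Real.pi / q) / (1 + Real.cos (Real.pi / q))

/-! ### Auxiliary definitions for the proof -/

set_option linter.unusedSectionVars false
set_option linter.unusedVariables false

/-- The off-diagonal weight of the comparison kernel. -/
noncomputable def tQ (q : ℕ) : ℝ :=
  if Even q then 1 / 2 else 1 / (2 * Real.cos (Real.pi / q))

/-- The circulant eigenvalues. -/
noncomputable def lamQ (q : ℕ) [NeZero q] (k : ZMod q) : ℝ :=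
  1 + 2 * tQ q * Real.cos (2 * Real.pi * k.val / q)

/-- The single-letter comparison kernel. -/
noncomputable def fQ (q : ℕ) [NeZero q] (m : ZMod q) : ℝ :=
  if m = 0 then 1 else if m = 1 ∨ m = -1 then tQ q else 0

/-- The Fourier/Gram vectors. -/
noncomputable def uQ (q : ℕ) [NeZero q] (a k : ZMod q) : ℂ :=
  (Real.sqrt (lamQ q k / q) : ℂ) * ZMod.stdAddChar (a * k)

section aux
variable {q : ℕ} [NeZero q]

lemma cos_pos_q (hq : 4 ≤ q) : 0 < Real.cos (Real.pi / q) := by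
  apply Real.cos_pos_of_mem_Ioo
  have hq0 : (0:ℝ) < q := by positivity
  constructor
  · have : (0:ℝ) < Real.pi / q := by positivity
    linarith [Real.pi_pos]
  · rw [div_lt_div_iff₀ hq0 two_pos]
    have : (4:ℝ) ≤ q := by exact_mod_cast hq
    nlinarith [Real.pi_pos]

lemma tQ_pos (hq : 4 ≤ q) : 0 < tQ q := by
  rw [tQ]
  split_ifs
  · norm_num
  · have := cos_pos_q hq
    positivity

lemma tQ_le_alpha (hq : 4 ≤ q) {β : ℝ}
    (heven : Even q → 1 / 2 ≤ β)
    (hodd : Odd q → 1 / (2 * Real.cos (Real.pi / q)) ≤ β) : tQ q ≤ β := by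
  rw [tQ]
  split_ifs with h
  · exact heven h
  · exact hodd (Nat.odd_iff.mpr (Nat.not_even_iff.mp h))

lemma cos_ge_aux (hq : 4 ≤ q) (hodd : ¬ Even q) (v : ℕ) (hv : v < q) :
    -Real.cos (Real.pi / q) ≤ Real.cos (2 * Real.pi * v / q) := by
  have hq0 : (0:ℝ) < q := by positivity
  have hpi := Real.pi_pos
  have key : ∀ w : ℕ, 2 * w + 1 ≤ q →
      -Real.cos (Real.pi / q) ≤ Real.cos (2 * Real.pi * w / q) := by
    intro w hw
    rw [← Real.cos_pi_sub]
    apply Real.cos_le_cos_of_nonneg_of_le_pi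
    · positivity
    · have h1 : 0 < Real.pi / q := by positivity
      linarith
    · rw [div_le_iff₀ hq0]
      have hcast : (2 * (w:ℝ) + 1) ≤ q := by exact_mod_cast hw
      have he : (Real.pi - Real.pi / q) * q = Real.pi * q - Real.pi := by
        field_simp
      rw [he]
      nlinarith [mul_nonneg hpi.le (sub_nonneg.mpr hcast)]
  rcases le_or_gt (2 * v + 1) q with h | h
  · exact key v h
  · have hq2 : q % 2 = 1 := Nat.not_even_iff.mp hodd
    have hwv : 2 * (q - v) + 1 ≤ q := by omega
    have := key (q - v) hwv
    have heq : Real.cos (2 * Real.pi * (q - v : ℕ) / q) = Real.cos (2 * Real.pi * v / q) := by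
      have hcast : ((q - v : ℕ) : ℝ) = (q : ℝ) - v := by
        push_cast [Nat.cast_sub hv.le]
        ring
      rw [hcast]
      have harg : 2 * Real.pi * ((q:ℝ) - v) / q = 2 * Real.pi - 2 * Real.pi * v / q := by
        field_simp
      rw [harg, Real.cos_two_pi_sub]
    linarith [heq ▸ this]

lemma lamQ_nonneg (hq : 4 ≤ q) (k : ZMod q) : 0 ≤ lamQ q k := by
  rw [lamQ, tQ]
  split_ifs with h
  · have := Real.neg_one_le_cos (2 * Real.pi * k.val / q)
    linarith
  · have hc := cos_pos_q hq
    have hb := cos_ge_aux hq h k.val (ZMod.val_lt k)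
    have h2 : 2 * (1 / (2 * Real.cos (Real.pi / q))) * Real.cos (2 * Real.pi * k.val / q)
        = Real.cos (2 * Real.pi * k.val / q) / Real.cos (Real.pi / q) := by
      field_simp
    rw [h2]
    have h3 : (-Real.cos (Real.pi / q)) / Real.cos (Real.pi / q)
        ≤ Real.cos (2 * Real.pi * k.val / q) / Real.cos (Real.pi / q) := by
      gcongr
    rw [neg_div, div_self hc.ne'] at h3
    linarith

lemma thetaQ_pos (hq : 4 ≤ q) : 0 < thetaQ q := by
  rw [thetaQ]
  have hq0 : (0:ℝ) < q := by positivity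
  split_ifs
  · positivity
  · have := cos_pos_q hq
    positivity

lemma thetaQ_inv (hq : 4 ≤ q) : (thetaQ q)⁻¹ = (1 + 2 * tQ q) / q := by
  have hq0 : (0:ℝ) < q := by positivity
  rw [thetaQ, tQ]
  split_ifs
  · rw [inv_div]
    norm_num
  · have hc := cos_pos_q hq
    rw [inv_div]
    field_simp
    ring

lemma chi_neg (j : ZMod q) :
    ZMod.stdAddChar (-j) = (starRingEnd ℂ) (ZMod.stdAddChar j) := by
  rw [AddChar.map_neg_eq_inv, Complex.inv_eq_conj, ZMod.stdAddChar_apply]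
  exact Circle.norm_coe (ZMod.toCircle j)

lemma chi_add_chi_neg (k : ZMod q) :
    ZMod.stdAddChar k + ZMod.stdAddChar (-k)
      = ((2 * Real.cos (2 * Real.pi * k.val / q) : ℝ) : ℂ) := by
  have chi_eq : ZMod.stdAddChar k
      = Complex.exp (((2 * Real.pi * k.val / q : ℝ) : ℂ) * Complex.I) := by
    rw [ZMod.stdAddChar_apply, ZMod.toCircle_apply]
    congr 1
    push_cast
    ring
  rw [chi_neg, chi_eq, Complex.add_conj, Complex.exp_ofReal_mul_I_re]

lemma nat_ne_zero_zmod (hq : 4 ≤ q) {j : ℕ} (hj1 : 1 ≤ j) (hj2 : j ≤ 3) :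
    ((j : ℕ) : ZMod q) ≠ 0 := by
  intro h
  have hd : (q : ℕ) ∣ j := (ZMod.natCast_eq_zero_iff j q).mp h
  have := Nat.le_of_dvd (by omega) hd
  omega

lemma one_ne_zero_zmod (hq : 4 ≤ q) : (1 : ZMod q) ≠ 0 := by
  simpa using nat_ne_zero_zmod hq (j := 1) le_rfl (by norm_num)

lemma two_ne_zero_zmod (hq : 4 ≤ q) : (2 : ZMod q) ≠ 0 := by
  simpa using nat_ne_zero_zmod hq (j := 2) (by norm_num) (by norm_num)

lemma neg_one_ne_zero_zmod (hq : 4 ≤ q) : (-1 : ZMod q) ≠ 0 := by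
  simpa [neg_eq_zero] using one_ne_zero_zmod hq

lemma one_ne_neg_one_zmod (hq : 4 ≤ q) : (1 : ZMod q) ≠ -1 := by
  intro h
  apply two_ne_zero_zmod hq
  linear_combination h

/-- Key Fourier identity. -/
lemma sum_conj_u_mul_u (hq : 4 ≤ q) (a b : ZMod q) :
    ∑ k : ZMod q, (starRingEnd ℂ) (uQ q a k) * uQ q b k = (fQ q (b - a) : ℂ) := by
  have hlam : ∀ k : ZMod q, 0 ≤ lamQ q k := lamQ_nonneg hq
  set ψ : AddChar (ZMod q) ℂ := ZMod.stdAddChar with hψ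
  set m : ZMod q := b - a with hm
  set t : ℝ := tQ q with ht
  have hq0 : (q : ℂ) ≠ 0 := by
    exact_mod_cast Nat.cast_ne_zero.mpr (NeZero.ne q)
  have step1 : ∀ k : ZMod q, (starRingEnd ℂ) (uQ q a k) * uQ q b k
      = (q : ℂ)⁻¹ * (ψ (k * m) + t * ψ (k * (m + 1)) + t * ψ (k * (m - 1))) := by
    intro k
    have e1 : (starRingEnd ℂ) (uQ q a k) * uQ q b k
        = ((lamQ q k / q : ℝ) : ℂ) * ψ (k * m) := by
      rw [uQ, uQ, map_mul, Complex.conj_ofReal, ← chi_neg]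
      have h1 : ψ (-(a * k)) * ψ (b * k) = ψ (k * m) := by
        rw [← AddChar.map_add_eq_mul]
        congr 1
        ring
      calc (Real.sqrt (lamQ q k / q) : ℂ) * ψ (-(a * k))
            * ((Real.sqrt (lamQ q k / q) : ℂ) * ψ (b * k))
          = ((Real.sqrt (lamQ q k / q) * Real.sqrt (lamQ q k / q) : ℝ) : ℂ)
            * (ψ (-(a * k)) * ψ (b * k)) := by push_cast; ring
        _ = ((lamQ q k / q : ℝ) : ℂ) * ψ (k * m) := by
            rw [Real.mul_self_sqrt (div_nonneg (hlam k) (Nat.cast_nonneg q)), h1]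
    rw [e1]
    have hcast : ((lamQ q k / q : ℝ) : ℂ) = (q : ℂ)⁻¹ * (1 + (t : ℂ) * (ψ k + ψ (-k))) := by
      have h2 : ((lamQ q k : ℝ) : ℂ) = 1 + (t : ℂ) * (ψ k + ψ (-k)) := by
        rw [chi_add_chi_neg, lamQ]
        push_cast
        ring
      rw [div_eq_inv_mul, Complex.ofReal_mul, h2]
      push_cast
      ring
    rw [hcast]
    have hmul1 : ψ k * ψ (k * m) = ψ (k * (m + 1)) := by
      rw [← AddChar.map_add_eq_mul]; congr 1; ring
    have hmul2 : ψ (-k) * ψ (k * m) = ψ (k * (m - 1)) := by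
      rw [← AddChar.map_add_eq_mul]; congr 1; ring
    calc (q : ℂ)⁻¹ * (1 + (t : ℂ) * (ψ k + ψ (-k))) * ψ (k * m)
        = (q : ℂ)⁻¹ * (ψ (k * m) + t * (ψ k * ψ (k * m)) + t * (ψ (-k) * ψ (k * m))) := by
          ring
      _ = _ := by rw [hmul1, hmul2]
  rw [Finset.sum_congr rfl fun k _ => step1 k, ← Finset.mul_sum]
  have horth : ∀ c : ZMod q, ∑ k : ZMod q, ψ (k * c) = if c = 0 then (q : ℂ) else 0 := by
    intro c
    rw [hψ, AddChar.sum_mulShift c (ZMod.isPrimitive_stdAddChar q)]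
    simp [ZMod.card]
  have hsplit : ∑ k : ZMod q, (ψ (k * m) + (t:ℂ) * ψ (k * (m + 1)) + (t:ℂ) * ψ (k * (m - 1)))
      = (if m = 0 then (q : ℂ) else 0) + t * (if m + 1 = 0 then (q : ℂ) else 0)
        + t * (if m - 1 = 0 then (q : ℂ) else 0) := by
    rw [Finset.sum_add_distrib, Finset.sum_add_distrib, ← Finset.mul_sum, ← Finset.mul_sum,
      horth, horth, horth]
  rw [hsplit]
  have hm1 : m + 1 = 0 ↔ m = -1 := by constructor <;> intro h <;> linear_combination h
  have hm2 : m - 1 = 0 ↔ m = 1 := sub_eq_zero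
  rcases eq_or_ne m 0 with h0 | h0
  · have ha : ¬ (m + 1 = 0) := by rw [hm1, h0]; exact fun h => neg_one_ne_zero_zmod hq h.symm
    have hb : ¬ (m - 1 = 0) := by rw [hm2, h0]; exact fun h => one_ne_zero_zmod hq h.symm
    rw [if_pos h0, if_neg ha, if_neg hb, fQ, if_pos h0]
    field_simp
    simp
  · rcases eq_or_ne m 1 with h1 | h1
    · have ha : ¬ (m + 1 = 0) := by
        rw [hm1, h1]; exact one_ne_neg_one_zmod hq
      rw [if_neg h0, if_pos (hm2.mpr h1), if_neg ha, fQ, if_neg h0, if_pos (Or.inl h1)]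
      field_simp
      rw [ht]; ring
    · rcases eq_or_ne m (-1) with h2 | h2
      · have hb : ¬ (m - 1 = 0) := by rw [hm2]; exact fun h => h1 h
        rw [if_neg h0, if_pos (hm1.mpr h2), if_neg (hm2.not.mpr h1), fQ, if_neg h0,
          if_pos (Or.inr h2)]
        field_simp
        rw [ht]; ring
      · rw [if_neg h0, if_neg (hm1.not.mpr h2), if_neg (hm2.not.mpr h1), fQ, if_neg h0,
          if_neg (by tauto)]
        simp

lemma uQ_zero (a : ZMod q) : uQ q a 0 = (Real.sqrt ((1 + 2 * tQ q) / q) : ℂ) := by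
  rw [uQ, mul_zero, AddChar.map_zero_eq_one, mul_one]
  congr 2
  rw [lamQ]
  norm_num [ZMod.val_zero]

lemma g1_nonneg {ε : ℝ} (a b : ZMod q) : 0 ≤ g1 q ε a b :=
  Finset.sum_nonneg fun _ _ => Real.sqrt_nonneg _

lemma g1_self (hq : 4 ≤ q) {ε : ℝ} (hε : 0 < ε) (hε' : ε ≤ 1 / 2) (a : ZMod q) :
    1 ≤ g1 q ε a a := by
  have hne : a ≠ a + 1 := by
    intro h
    exact one_ne_zero_zmod hq (by linear_combination -h)
  have hsum : ∑ y ∈ ({a, a + 1} : Finset (ZMod q)), Real.sqrt (W q ε y a * W q ε y a)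
      ≤ g1 q ε a a := by
    apply Finset.sum_le_sum_of_subset_of_nonneg (Finset.subset_univ _)
    intro y _ _
    exact Real.sqrt_nonneg _
  rw [Finset.sum_pair hne] at hsum
  have h1 : W q ε a a = 1 - ε := by rw [W, if_pos rfl]
  have h2 : W q ε (a + 1) a = ε := by
    rw [W, if_neg (by exact fun h => hne h.symm), if_pos rfl]
  rw [h1, h2, Real.sqrt_mul_self (by linarith), Real.sqrt_mul_self hε.le] at hsum
  linarith

lemma g1_adj (hq : 4 ≤ q) {ε : ℝ} (hε : 0 < ε) (hε' : ε ≤ 1 / 2) (a b : ZMod q)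
    (h : b = a + 1 ∨ a = b + 1) : alphaE ε ≤ g1 q ε a b := by
  have hne : ∀ c : ZMod q, c ≠ c + 1 := by
    intro c hc
    exact one_ne_zero_zmod hq (by linear_combination -hc)
  rcases h with h | h
  · have hterm : Real.sqrt (W q ε b a * W q ε b b) = alphaE ε := by
      have h1 : W q ε b a = ε := by
        rw [W, if_neg (by rw [h]; exact fun hc => hne a hc.symm), if_pos h]
      have h2 : W q ε b b = 1 - ε := by rw [W, if_pos rfl]
      rw [h1, h2, alphaE]
    calc alphaE ε = Real.sqrt (W q ε b a * W q ε b b) := hterm.symm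
      _ ≤ g1 q ε a b := Finset.single_le_sum (f := fun y => Real.sqrt (W q ε y a * W q ε y b))
          (fun y _ => Real.sqrt_nonneg _) (Finset.mem_univ b)
  · have hterm : Real.sqrt (W q ε a a * W q ε a b) = alphaE ε := by
      have h1 : W q ε a a = 1 - ε := by rw [W, if_pos rfl]
      have h2 : W q ε a b = ε := by
        rw [W, if_neg (by rw [h]; exact fun hc => hne b hc.symm), if_pos h]
      rw [h1, h2, alphaE, mul_comm]
    calc alphaE ε = Real.sqrt (W q ε a a * W q ε a b) := hterm.symm
      _ ≤ g1 q ε a b := Finset.single_le_sum (f := fun y => Real.sqrt (W q ε y a * W q ε y b))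
          (fun y _ => Real.sqrt_nonneg _) (Finset.mem_univ a)

lemma fQ_nonneg (hq : 4 ≤ q) (m : ZMod q) : 0 ≤ fQ q m := by
  rw [fQ]
  split_ifs
  · norm_num
  · exact (tQ_pos hq).le
  · exact le_refl 0

lemma fQ_le (hq : 4 ≤ q) {ε ρ : ℝ} (hε : 0 < ε) (hε' : ε ≤ 1 / 2) (hρ : 1 ≤ ρ)
    (ht : tQ q ≤ alphaE ε ^ (1 / ρ)) (a b : ZMod q) :
    fQ q (b - a) ≤ g1 q ε a b ^ (1 / ρ) := by
  have hρ0 : 0 ≤ 1 / ρ := by positivity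
  rw [fQ]
  split_ifs with h0 h1
  · -- b - a = 0, so a = b
    have hab : a = b := (sub_eq_zero.mp h0).symm
    subst hab
    calc (1:ℝ) = 1 ^ (1/ρ) := (Real.one_rpow _).symm
      _ ≤ g1 q ε a a ^ (1/ρ) :=
        Real.rpow_le_rpow (by norm_num) (g1_self hq hε hε' a) hρ0
  · -- b - a = ±1
    have hadj : b = a + 1 ∨ a = b + 1 := by
      rcases h1 with h | h
      · left; linear_combination h
      · right; linear_combination -h
    calc tQ q ≤ alphaE ε ^ (1/ρ) := ht
      _ ≤ g1 q ε a b ^ (1/ρ) :=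
        Real.rpow_le_rpow (Real.sqrt_nonneg _) (g1_adj hq hε hε' a b hadj) hρ0
  · exact Real.rpow_nonneg (g1_nonneg a b) _

end aux

theorem stmt1 (q n : ℕ) [NeZero q] (hq : 4 ≤ q) (hn : 1 ≤ n)
    (ε ρ : ℝ) (hε : 0 < ε) (hε' : ε ≤ 1 / 2) (hρ : 1 ≤ ρ)
    (heven : Even q → 1 / 2 ≤ alphaE ε ^ (1 / ρ))
    (hodd : Odd q → 1 / (2 * Real.cos (Real.pi / q)) ≤ alphaE ε ^ (1 / ρ)) :
    ∀ P : (Fin n → ZMod q) → ℝ, (∀ x, 0 ≤ P x) → (∑ x, P x = 1) →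
      (thetaQ q ^ n)⁻¹ ≤ Qn q n ε ρ P := by
  intro P hP hP1
  have ht : tQ q ≤ alphaE ε ^ (1 / ρ) := tQ_le_alpha hq heven hodd
  -- Step A : Qn ≥ F
  set F : ℝ := ∑ x : Fin n → ZMod q, ∑ x' : Fin n → ZMod q,
      P x * P x' * ∏ k, fQ q (x' k - x k) with hF
  have hQF : F ≤ Qn q n ε ρ P := by
    apply Finset.sum_le_sum
    intro x _
    apply Finset.sum_le_sum
    intro x' _
    apply mul_le_mul_of_nonneg_left _ (mul_nonneg (hP x) (hP x'))
    have hgn : gn q n ε x x' ^ (1/ρ) = ∏ k, g1 q ε (x k) (x' k) ^ (1/ρ) := by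
      rw [gn, ← Real.finset_prod_rpow]
      exact fun i _ => g1_nonneg _ _
    rw [hgn]
    exact Finset.prod_le_prod (fun k _ => fQ_nonneg hq _)
      (fun k _ => fQ_le hq hε hε' hρ ht _ _)
  -- Step B : F = ∑ j normSq (S j)
  set S : (Fin n → ZMod q) → ℂ :=
    fun j => ∑ x : Fin n → ZMod q, (P x : ℂ) * ∏ k, uQ q (x k) (j k) with hS
  have hSapp : ∀ j, S j = ∑ x : Fin n → ZMod q, (P x : ℂ) * ∏ k, uQ q (x k) (j k) :=
    fun j => rfl
  have hconj : ∀ j, (starRingEnd ℂ) (S j)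
      = ∑ x : Fin n → ZMod q, (P x : ℂ) * ∏ k, (starRingEnd ℂ) (uQ q (x k) (j k)) := by
    intro j
    rw [hSapp, map_sum]
    refine Finset.sum_congr rfl fun x _ => ?_
    rw [map_mul, Complex.conj_ofReal, map_prod]
  have hprod : ∀ x x' : Fin n → ZMod q,
      (∑ j : Fin n → ZMod q,
        ∏ k, ((starRingEnd ℂ) (uQ q (x k) (j k)) * uQ q (x' k) (j k)))
      = ∏ k, (fQ q (x' k - x k) : ℂ) := by
    intro x x'
    rw [← Fintype.piFinset_univ]
    refine ((Finset.prod_univ_sum (fun _ : Fin n => (Finset.univ : Finset (ZMod q)))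
      (fun k c => (starRingEnd ℂ) (uQ q (x k) c) * uQ q (x' k) c)).symm).trans ?_
    exact Finset.prod_congr rfl fun k _ => sum_conj_u_mul_u hq (x k) (x' k)
  have hFSC : (∑ j : Fin n → ZMod q, (Complex.normSq (S j) : ℂ)) = (F : ℂ) := by
    calc ∑ j : Fin n → ZMod q, (Complex.normSq (S j) : ℂ)
        = ∑ j : Fin n → ZMod q, (starRingEnd ℂ) (S j) * S j :=
          Finset.sum_congr rfl fun j _ => Complex.normSq_eq_conj_mul_self
      _ = ∑ j : Fin n → ZMod q, ∑ x : Fin n → ZMod q, ∑ x' : Fin n → ZMod q,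
            ((P x : ℂ) * ∏ k, (starRingEnd ℂ) (uQ q (x k) (j k)))
            * ((P x' : ℂ) * ∏ k, uQ q (x' k) (j k)) := by
          refine Finset.sum_congr rfl fun j _ => ?_
          rw [hconj j, hSapp j]
          exact Finset.sum_mul_sum _ _ _ _
      _ = ∑ x : Fin n → ZMod q, ∑ x' : Fin n → ZMod q, ∑ j : Fin n → ZMod q,
            ((P x : ℂ) * ∏ k, (starRingEnd ℂ) (uQ q (x k) (j k)))
            * ((P x' : ℂ) * ∏ k, uQ q (x' k) (j k)) := by
          rw [Finset.sum_comm]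
          exact Finset.sum_congr rfl fun x _ => Finset.sum_comm
      _ = ∑ x : Fin n → ZMod q, ∑ x' : Fin n → ZMod q,
            (P x : ℂ) * (P x' : ℂ) * ∏ k, (fQ q (x' k - x k) : ℂ) := by
          refine Finset.sum_congr rfl fun x _ => Finset.sum_congr rfl fun x' _ => ?_
          rw [← hprod x x', Finset.mul_sum]
          refine Finset.sum_congr rfl fun j _ => ?_
          rw [Finset.prod_mul_distrib]
          ring
      _ = (F : ℂ) := by
          rw [hF]
          push_cast
          rfl
  have hFS : F = ∑ j : Fin n → ZMod q, Complex.normSq (S j) := by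
    have : ((∑ j : Fin n → ZMod q, Complex.normSq (S j) : ℝ) : ℂ) = (F : ℂ) := by
      push_cast
      exact hFSC
    exact_mod_cast this.symm
  -- Step C : normSq (S 0) = ((1+2t)/q)^n and conclusion
  have hS0 : S (fun _ => 0) = ((Real.sqrt ((1 + 2 * tQ q) / q) ^ n : ℝ) : ℂ) := by
    have hu : ∀ x : Fin n → ZMod q,
        (∏ k : Fin n, uQ q (x k) ((fun _ => (0 : ZMod q)) k))
        = ((Real.sqrt ((1 + 2 * tQ q) / q) : ℝ) : ℂ) ^ n := by
      intro x
      calc ∏ k : Fin n, uQ q (x k) ((fun _ => (0 : ZMod q)) k)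
          = ∏ _k : Fin n, ((Real.sqrt ((1 + 2 * tQ q) / q) : ℝ) : ℂ) :=
            Finset.prod_congr rfl fun k _ => uQ_zero (x k)
        _ = _ := by rw [Finset.prod_const, Finset.card_univ, Fintype.card_fin]
    calc S (fun _ => 0)
        = ∑ x : Fin n → ZMod q,
            (P x : ℂ) * ((Real.sqrt ((1 + 2 * tQ q) / q) : ℝ) : ℂ) ^ n := by
          rw [hSapp]
          exact Finset.sum_congr rfl fun x _ => by rw [hu x]
      _ = (∑ x : Fin n → ZMod q, (P x : ℂ))
            * ((Real.sqrt ((1 + 2 * tQ q) / q) : ℝ) : ℂ) ^ n := by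
          rw [← Finset.sum_mul]
      _ = ((Real.sqrt ((1 + 2 * tQ q) / q) ^ n : ℝ) : ℂ) := by
          have hcast : (∑ x : Fin n → ZMod q, (P x : ℂ))
              = ((∑ x : Fin n → ZMod q, P x : ℝ) : ℂ) := by push_cast; rfl
          rw [hcast, hP1]
          push_cast
          ring
  have hc_nonneg : 0 ≤ (1 + 2 * tQ q) / q := by
    have hq0 : (0:ℝ) < q := by positivity
    have := tQ_pos hq
    positivity
  have hsum_ge : ((1 + 2 * tQ q) / q) ^ n ≤ ∑ j : Fin n → ZMod q, Complex.normSq (S j) := by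
    have h1 : Complex.normSq (S (fun _ => 0)) = ((1 + 2 * tQ q) / q) ^ n := by
      rw [hS0, Complex.normSq_ofReal, ← pow_add, ← two_mul, pow_mul, Real.sq_sqrt hc_nonneg]
    calc ((1 + 2 * tQ q) / q) ^ n = Complex.normSq (S (fun _ => 0)) := h1.symm
      _ ≤ ∑ j : Fin n → ZMod q, Complex.normSq (S j) :=
        Finset.single_le_sum (f := fun j => Complex.normSq (S j))
          (fun j _ => Complex.normSq_nonneg _) (Finset.mem_univ _)
  have hfinal : (thetaQ q ^ n)⁻¹ = ((1 + 2 * tQ q) / q) ^ n := by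
    rw [← inv_pow, thetaQ_inv hq]
  rw [hfinal]
  calc ((1 + 2 * tQ q) / q) ^ n ≤ ∑ j : Fin n → ZMod q, Complex.normSq (S j) := hsum_ge
    _ = F := hFS.symm
    _ ≤ Qn q n ε ρ P := hQF
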